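/- Let (X,r) be a finite simple solution of the Yang–Baxter equation. If |X| is not a prime number, then (X,r) is irretractable. -/

import Mathlib

open Function

/-- The map `r₁₂ = r × id` on `X³`. -/
def yb12 {X : Type*} (r : X × X → X × X) : X × X × X → X × X × X :=
  fun p => ((r (p.1, p.2.1)).1, ((r (p.1, p.2.1)).2, p.2.2))

/-- The map `r₂₃ = id × r` on `X³`. -/
def yb23 {X : Type*} (r : X × X → X × X) : X × X × X → X × X × X :=
  fun p => (p.1, r p.2)

/-- `(X, r)` is an involutive non-degenerate set-theoretic solution of the
Yang–Baxter equation. -/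
structure IsYBSolution {X : Type*} (r : X × X → X × X) : Prop where
  invol : ∀ p, r (r p) = p
  sigma_bij : ∀ x, Function.Bijective (fun y => (r (x, y)).1)
  gamma_bij : ∀ y, Function.Bijective (fun x => (r (x, y)).2)
  braid : yb12 r ∘ yb23 r ∘ yb12 r = yb23 r ∘ yb12 r ∘ yb23 r

/-- A homomorphism of solutions: `f (σ_x y) = σ'_{f x} (f y)`. -/
def IsSolHom {X Y : Type*} (r : X × X → X × X) (s : Y × Y → Y × Y) (f : X → Y) : Prop :=
  ∀ x y, f (r (x, y)).1 = (s (f x, f y)).1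

/-- The permutation group `G(X,r)`: the subgroup of `Sym(X)` generated by the
permutations `σ_x`. -/
def permGroup {X : Type*} (r : X × X → X × X) : Subgroup (Equiv.Perm X) :=
  Subgroup.closure {g : Equiv.Perm X | ∃ x, ∀ y, g y = (r (x, y)).1}

/-- `(X,r)` is indecomposable: `G(X,r)` acts transitively on `X`. -/
def IsIndecomposable {X : Type*} (r : X × X → X × X) : Prop :=
  ∀ x y : X, ∃ g ∈ permGroup r, g x = y

/-- `(X,r)` is irretractable: `σ_x = σ_y` implies `x = y`. -/
def IsIrretractable {X : Type*} (r : X × X → X × X) : Prop :=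
  ∀ x y : X, (∀ z, (r (x, z)).1 = (r (y, z)).1) → x = y

/-- `(X,r)` is a simple solution: `|X| > 1` and every surjective homomorphism of
solutions from `(X,r)` is either bijective or has a one-element target. -/
def IsSimpleSolution {X : Type u} (r : X × X → X × X) : Prop :=
  Nontrivial X ∧ ∀ (Y : Type u) (s : Y × Y → Y × Y), IsYBSolution s →
    ∀ f : X → Y, Function.Surjective f → IsSolHom r s f →
      Function.Bijective f ∨ Subsingleton Y

namespace YBAux
variable {X : Type*} {r : X × X → X × X}

noncomputable def sig (hsol : IsYBSolution r) (x : X) : Equiv.Perm X :=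
  Equiv.ofBijective _ (hsol.sigma_bij x)

lemma sig_apply (hsol : IsYBSolution r) (x y : X) : sig hsol x y = (r (x, y)).1 := rfl

lemma invol1 (hsol : IsYBSolution r) (x y : X) :
    (r ((r (x, y)).1, (r (x, y)).2)).1 = x := by
  have := hsol.invol (x, y)
  have h2 : r (r (x,y)) = r ((r (x,y)).1, (r (x,y)).2) := rfl
  rw [h2] at this
  exact congrArg Prod.fst this

lemma invol2 (hsol : IsYBSolution r) (x y : X) :
    (r ((r (x, y)).1, (r (x, y)).2)).2 = y := by
  have := hsol.invol (x, y)
  have h2 : r (r (x,y)) = r ((r (x,y)).1, (r (x,y)).2) := rfl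
  rw [h2] at this
  exact congrArg Prod.snd this

lemma gamma_eq (hsol : IsYBSolution r) (x y : X) :
    (r (x, y)).2 = (sig hsol (r (x,y)).1).symm x := by
  apply (sig hsol (r (x,y)).1).injective
  rw [Equiv.apply_symm_apply]
  exact invol1 hsol x y

lemma braid1 (hsol : IsYBSolution r) (x y z : X) :
    (r ((r (x,y)).1, (r ((r (x,y)).2, z)).1)).1 = (r (x, (r (y,z)).1)).1 := by
  have h := congrFun hsol.braid (x, y, z)
  have := congrArg Prod.fst h
  simpa [yb12, yb23] using this

lemma keyK (hsol : IsYBSolution r) (x u z : X) :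
    (r (u, (r ((sig hsol u).symm x, z)).1)).1
      = (r (x, (r ((sig hsol x).symm u, z)).1)).1 := by
  set y := (sig hsol x).symm u with hy
  have hxy : (r (x, y)).1 = u := by
    rw [← sig_apply hsol, hy, Equiv.apply_symm_apply]
  have hb := braid1 hsol x y z
  rw [hxy] at hb
  have hg : (r (x, y)).2 = (sig hsol u).symm x := by
    rw [gamma_eq hsol x y, hxy]
  rw [hg] at hb
  exact hb

lemma sig_symm_congr (hsol : IsYBSolution r) {a b : X}
    (hab : ∀ z, (r (a, z)).1 = (r (b, z)).1) (x : X) :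
    (sig hsol a).symm x = (sig hsol b).symm x := by
  apply (hsol.sigma_bij a).injective
  show (r (a, (sig hsol a).symm x)).1 = (r (a, (sig hsol b).symm x)).1
  have h1 : (r (a, (sig hsol a).symm x)).1 = x := Equiv.apply_symm_apply (sig hsol a) x
  have h2 : (r (b, (sig hsol b).symm x)).1 = x := Equiv.apply_symm_apply (sig hsol b) x
  rw [h1, hab, h2]

lemma retract_inv_step (hsol : IsYBSolution r) {a b : X}
    (hab : ∀ z, (r (a, z)).1 = (r (b, z)).1) (x z : X) :
    (r ((sig hsol x).symm a, z)).1 = (r ((sig hsol x).symm b, z)).1 := by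
  apply (hsol.sigma_bij x).injective
  show (r (x, (r ((sig hsol x).symm a, z)).1)).1 = (r (x, (r ((sig hsol x).symm b, z)).1)).1
  rw [← keyK hsol x a z, ← keyK hsol x b z]
  rw [sig_symm_congr hsol hab x]
  exact hab _

lemma retract_step [Finite X] (hsol : IsYBSolution r) {a b : X}
    (hab : ∀ z, (r (a, z)).1 = (r (b, z)).1) (x z : X) :
    (r ((r (x, a)).1, z)).1 = (r ((r (x, b)).1, z)).1 := by
  have hiter : ∀ n : ℕ, ∀ w, (r (((sig hsol x)⁻¹ ^ n) a, w)).1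
      = (r (((sig hsol x)⁻¹ ^ n) b, w)).1 := by
    intro n
    induction n with
    | zero => simpa using hab
    | succ n ih =>
        intro w
        have h1 : ((sig hsol x)⁻¹ ^ (n+1)) a = (sig hsol x).symm (((sig hsol x)⁻¹ ^ n) a) := by
          rw [pow_succ', Equiv.Perm.mul_apply]; rfl
        have h2 : ((sig hsol x)⁻¹ ^ (n+1)) b = (sig hsol x).symm (((sig hsol x)⁻¹ ^ n) b) := by
          rw [pow_succ', Equiv.Perm.mul_apply]; rfl
        rw [h1, h2]
        exact retract_inv_step hsol ih _ w
  set g := sig hsol x with hg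
  have ho : 0 < orderOf g := orderOf_pos g
  have hpow : g⁻¹ ^ (orderOf g - 1) = g := by
    have h1 : g ^ (orderOf g - 1) * g = 1 := by
      rw [← pow_succ, Nat.sub_add_cancel ho, pow_orderOf_eq_one]
    have h2 : g ^ (orderOf g - 1) = g⁻¹ := eq_inv_of_mul_eq_one_left h1
    rw [inv_pow, h2, inv_inv]
  have h3 := hiter (orderOf g - 1) z
  rw [hpow] at h3
  exact h3

/-- The retraction setoid: `x ∼ y` iff `σ_x = σ_y`. -/
def retSetoid (r : X × X → X × X) : Setoid X where
  r a b := ∀ z, (r (a, z)).1 = (r (b, z)).1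
  iseqv := ⟨fun _ _ => rfl, fun h z => (h z).symm, fun h1 h2 z => (h1 z).trans (h2 z)⟩

lemma retWD [Finite X] (hsol : IsYBSolution r) (x y x' y' : X)
    (hx : ∀ z, (r (x, z)).1 = (r (x', z)).1) (hy : ∀ z, (r (y, z)).1 = (r (y', z)).1) :
    ((Quotient.mk (retSetoid r) (r (x,y)).1 : Quotient (retSetoid r)),
      (Quotient.mk (retSetoid r) (r (x,y)).2 : Quotient (retSetoid r)))
    = (Quotient.mk (retSetoid r) (r (x',y')).1, Quotient.mk (retSetoid r) (r (x',y')).2) := by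
  have h1 : (r (x, y)).1 = (r (x', y)).1 := hx y
  have hrel1 : ∀ z, (r ((r (x,y)).1, z)).1 = (r ((r (x',y')).1, z)).1 := by
    intro z
    rw [h1]
    exact retract_step hsol hy x' z
  have hrel2 : ∀ z, (r ((r (x,y)).2, z)).1 = (r ((r (x',y')).2, z)).1 := by
    intro z
    rw [gamma_eq hsol x y, gamma_eq hsol x' y']
    have e1 : (sig hsol (r (x,y)).1).symm x = (sig hsol (r (x',y')).1).symm x :=
      sig_symm_congr hsol hrel1 x
    rw [e1]
    exact retract_inv_step hsol hx _ z
  exact Prod.ext (Quotient.sound hrel1) (Quotient.sound hrel2)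

/-- The retraction solution. -/
noncomputable def retS [Finite X] (hsol : IsYBSolution r) :
    Quotient (retSetoid r) × Quotient (retSetoid r) →
      Quotient (retSetoid r) × Quotient (retSetoid r) :=
  fun p => Quotient.lift₂
    (fun x y => ((Quotient.mk (retSetoid r) (r (x,y)).1 : Quotient (retSetoid r)),
      (Quotient.mk (retSetoid r) (r (x,y)).2 : Quotient (retSetoid r))))
    (fun x y x' y' hx hy => retWD hsol x y x' y' hx hy) p.1 p.2

lemma retS_mk [Finite X] (hsol : IsYBSolution r) (x y : X) :
    retS hsol (Quotient.mk (retSetoid r) x, Quotient.mk (retSetoid r) y)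
      = (Quotient.mk (retSetoid r) (r (x,y)).1, Quotient.mk (retSetoid r) (r (x,y)).2) := rfl

lemma retS_sol [Finite X] (hsol : IsYBSolution r) : IsYBSolution (retS hsol) := by
  have hfinq : Finite (Quotient (retSetoid r)) := Quotient.finite _
  constructor
  · rintro ⟨u, v⟩
    induction u using Quotient.ind
    induction v using Quotient.ind
    rename_i x y
    rw [retS_mk, retS_mk]
    rw [invol1 hsol x y, invol2 hsol x y]
  · intro u
    have hsurj : Surjective (fun v => (retS hsol (u, v)).1) := by
      induction u using Quotient.ind
      rename_i x
      intro w
      induction w using Quotient.ind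
      rename_i w
      obtain ⟨y, hy⟩ := (hsol.sigma_bij x).2 w
      refine ⟨Quotient.mk _ y, ?_⟩
      show (retS hsol (Quotient.mk _ x, Quotient.mk _ y)).1 = Quotient.mk _ w
      rw [retS_mk]; simp only at hy; rw [hy]
    exact ⟨Finite.injective_iff_surjective.mpr hsurj, hsurj⟩
  · intro v
    have hsurj : Surjective (fun u => (retS hsol (u, v)).2) := by
      induction v using Quotient.ind
      rename_i y
      intro w
      induction w using Quotient.ind
      rename_i w
      obtain ⟨x, hx⟩ := (hsol.gamma_bij y).2 w
      refine ⟨Quotient.mk _ x, ?_⟩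
      show (retS hsol (Quotient.mk _ x, Quotient.mk _ y)).2 = Quotient.mk _ w
      rw [retS_mk]; simp only at hx; rw [hx]
    exact ⟨Finite.injective_iff_surjective.mpr hsurj, hsurj⟩
  · funext p
    obtain ⟨u, v, w⟩ := p
    induction u using Quotient.ind
    induction v using Quotient.ind
    induction w using Quotient.ind
    rename_i x y z
    have hb := congrFun hsol.braid (x, y, z)
    let F3 : X × X × X → Quotient (retSetoid r) × Quotient (retSetoid r) × Quotient (retSetoid r) :=
      fun t => (Quotient.mk _ t.1, Quotient.mk _ t.2.1, Quotient.mk _ t.2.2)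
    have c12 : ∀ t, yb12 (retS hsol) (F3 t) = F3 (yb12 r t) := fun t => rfl
    have c23 : ∀ t, yb23 (retS hsol) (F3 t) = F3 (yb23 r t) := fun t => rfl
    show yb12 (retS hsol) (yb23 (retS hsol) (yb12 (retS hsol) (F3 (x,y,z))))
      = yb23 (retS hsol) (yb12 (retS hsol) (yb23 (retS hsol) (F3 (x,y,z))))
    rw [c12, c23, c12, c23, c12, c23]
    exact congrArg F3 hb

end YBAux

-- helpers

lemma flip_yb {Y : Type*} : IsYBSolution (fun p : Y × Y => (p.2, p.1)) := by
  constructor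
  · intro p; rfl
  · intro x; exact bijective_id
  · intro y; exact bijective_id
  · funext p; rfl

-- shift solution on ULift (ZMod d)
lemma shift_yb (d : ℕ) [NeZero d] :
    IsYBSolution (fun p : ULift.{u} (ZMod d) × ULift.{u} (ZMod d) =>
      (ULift.up (p.2.down + 1), ULift.up (p.1.down - 1))) := by
  constructor
  · intro p; simp
  · intro x
    refine ⟨fun a b h => ?_, fun z => ⟨ULift.up (z.down - 1), by simp⟩⟩
    have := congrArg ULift.down h
    simp only at this
    have : a.down = b.down := by linear_combination this
    exact ULift.ext _ _ this
  · intro y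
    refine ⟨fun a b h => ?_, fun z => ⟨ULift.up (z.down + 1), by simp⟩⟩
    have := congrArg ULift.down h
    simp only at this
    have : a.down = b.down := by linear_combination this
    exact ULift.ext _ _ this
  · funext p
    simp only [yb12, yb23, Function.comp_apply, Prod.mk.injEq, ULift.ext_iff]
    refine ⟨trivial, by ring_nf, trivial⟩

-- fixed points under zpow
lemma fix_zpow {α : Type*} (g : Equiv.Perm α) (x : α) (h : g x = x) :
    ∀ k : ℤ, (g ^ k) x = x := by
  have hn : ∀ n : ℕ, (g ^ n) x = x := by
    intro n; induction n with
    | zero => simp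
    | succ n ih => rw [pow_succ', Equiv.Perm.mul_apply, ih, h]
  intro k
  cases k with
  | ofNat n => simpa using hn n
  | negSucc n =>
      have := hn (n + 1)
      rw [zpow_negSucc]
      exact Equiv.Perm.inv_eq_iff_eq.mpr this.symm


/-- A finite simple solution of the YBE whose cardinality is not a
prime number is irretractable. -/
theorem finite_simple_solution_irretractable {X : Type u} [Finite X]
    (r : X × X → X × X)
    (hsol : IsYBSolution r) (hsimple : IsSimpleSolution r)
    (hcard : ¬ (Nat.card X).Prime) :
    IsIrretractable r := by
  classical
  intro a b hab
  by_contra hne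
  obtain ⟨hnontriv, hsimp⟩ := hsimple
  rcases hsimp (Quotient (YBAux.retSetoid r)) (YBAux.retS hsol) (YBAux.retS_sol hsol)
      (Quotient.mk _) Quotient.mk_surjective (fun x y => rfl) with hbij | hsub
  · exact hne (hbij.1 (Quotient.sound hab))
  exfalso
  have hconst : ∀ x y z, (r (x, z)).1 = (r (y, z)).1 := fun x y =>
    Quotient.exact (hsub.elim (Quotient.mk _ x) (Quotient.mk _ y))
  set π0 := YBAux.sig hsol a with hπ0
  -- orbit setoid of π0
  let oS : Setoid X :=
    ⟨fun u v => ∃ k : ℤ, (π0 ^ k) u = v, by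
      refine ⟨fun u => ⟨0, rfl⟩, ?_, ?_⟩
      · rintro u v ⟨k, hk⟩
        refine ⟨-k, ?_⟩
        rw [← hk, zpow_neg]
        exact Equiv.symm_apply_apply _ _
      · rintro u v w ⟨k, hk⟩ ⟨l, hl⟩
        refine ⟨l + k, ?_⟩
        rw [zpow_add, Equiv.Perm.mul_apply, hk, hl]⟩
  have horb : ∀ x y : X, (Quotient.mk oS (r (x, y)).1) = Quotient.mk oS y := by
    intro x y
    apply Quotient.sound
    refine ⟨-1, ?_⟩
    have hxy : (r (x, y)).1 = π0 y := hconst x a y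
    rw [hxy, zpow_neg, zpow_one]
    exact Equiv.symm_apply_apply _ _
  have hom2 : IsSolHom r (fun p : Quotient oS × Quotient oS => (p.2, p.1)) (Quotient.mk oS) :=
    fun x y => horb x y
  rcases hsimp (Quotient oS) _ flip_yb (Quotient.mk oS) Quotient.mk_surjective hom2
    with hbij2 | hsub2
  · -- σ = id : use the Boolean flip solution
    have hid : ∀ x y : X, (r (x, y)).1 = y := by
      intro x y
      exact hbij2.1 (horb x y)
    let f3 : X → ULift.{u} Bool := fun x => ULift.up (if x = a then true else false)
    have surj3 : Function.Surjective f3 := by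
      rintro ⟨zd⟩
      cases zd
      · refine ⟨b, ?_⟩
        have hba : ¬ b = a := fun h => hne h.symm
        simpa [f3] using hba
      · exact ⟨a, by simp [f3]⟩
    have hom3 : IsSolHom r (fun p : ULift.{u} Bool × ULift.{u} Bool => (p.2, p.1)) f3 := by
      intro x y
      show f3 (r (x, y)).1 = f3 y
      rw [hid]
    rcases hsimp _ _ flip_yb f3 surj3 hom3 with hbij3 | hsub3
    · have h2 := Nat.card_eq_of_bijective f3 hbij3
      rw [Nat.card_ulift] at h2
      have hb2 : Nat.card Bool = 2 := by
        rw [Nat.card_eq_fintype_card]; rfl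
      rw [hb2] at h2
      exact hcard (h2 ▸ Nat.prime_two)
    · exact not_subsingleton _ hsub3
  · -- π0 acts transitively : use the cyclic shift solution
    have htrans : ∀ x : X, ∃ k : ℤ, (π0 ^ k) a = x := fun x =>
      Quotient.exact (hsub2.elim (Quotient.mk oS a) (Quotient.mk oS x))
    have hex : ∃ m : ℕ, 0 < m ∧ (π0 ^ m) a = a :=
      ⟨orderOf π0, orderOf_pos π0, by rw [pow_orderOf_eq_one]; rfl⟩
    set c := Nat.find hex with hcdef
    have hcpos : 0 < c := (Nat.find_spec hex).1
    have hcfix : (π0 ^ c) a = a := (Nat.find_spec hex).2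
    have hfixc : ∀ k : ℤ, (π0 ^ ((c : ℤ) * k)) a = a := by
      intro k
      rw [zpow_mul]
      exact fix_zpow _ _ (by rw [zpow_natCast]; exact hcfix) k
    have hdvd : ∀ m : ℤ, (π0 ^ m) a = a → (c : ℤ) ∣ m := by
      intro m hm
      have h0 : (0:ℤ) ≤ m % c := Int.emod_nonneg m (by exact_mod_cast hcpos.ne')
      have hlt : m % c < (c:ℤ) := Int.emod_lt_of_pos m (by exact_mod_cast hcpos)
      have hsplit : m = m % (c:ℤ) + (c:ℤ) * (m / c) := by
        rw [add_comm]
        exact (Int.mul_ediv_add_emod m c).symm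
      have hr : (π0 ^ (m % (c:ℤ))) a = a := by
        have h1 : (π0 ^ m) a = (π0 ^ (m % (c:ℤ))) ((π0 ^ ((c:ℤ) * (m / c))) a) := by
          conv_lhs => rw [hsplit]
          rw [zpow_add, Equiv.Perm.mul_apply]
        rw [hfixc] at h1
        rw [← h1, hm]
      rcases h0.lt_or_eq with h00 | h00
      · exfalso
        have hnat : (π0 ^ ((m % (c:ℤ)).toNat)) a = a := by
          rw [← zpow_natCast, Int.toNat_of_nonneg h0]
          exact hr
        have hmin := Nat.find_min hex (show (m % (c:ℤ)).toNat < Nat.find hex by omega)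
        exact hmin ⟨by omega, hnat⟩
      · exact Int.dvd_of_emod_eq_zero h00.symm
    -- X is in bijection with Fin c
    have hbijec : Function.Bijective (fun i : Fin c => (π0 ^ (i : ℕ)) a) := by
      constructor
      · intro i j hij
        simp only at hij
        have h1 : (π0 ^ (((i:ℕ):ℤ) - ((j:ℕ):ℤ))) a = a := by
          rw [show ((i:ℕ):ℤ) - ((j:ℕ):ℤ) = -((j:ℕ):ℤ) + ((i:ℕ):ℤ) by ring,
            zpow_add, Equiv.Perm.mul_apply, zpow_natCast, hij, ← zpow_natCast, zpow_neg]
          exact Equiv.symm_apply_apply _ _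
        have hz : ((i:ℕ):ℤ) - ((j:ℕ):ℤ) = 0 := by
          apply Int.eq_zero_of_abs_lt_dvd (hdvd _ h1)
          have hi := i.2
          have hj := j.2
          rw [abs_lt]
          omega
        apply Fin.ext
        omega
      · intro x
        obtain ⟨k, hk⟩ := htrans x
        have h0 : (0:ℤ) ≤ k % c := Int.emod_nonneg k (by exact_mod_cast hcpos.ne')
        have hlt : k % c < (c:ℤ) := Int.emod_lt_of_pos k (by exact_mod_cast hcpos)
        refine ⟨⟨(k % (c:ℤ)).toNat, by omega⟩, ?_⟩
        simp only
        rw [← zpow_natCast, Int.toNat_of_nonneg h0]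
        have hsplit : k = k % (c:ℤ) + (c:ℤ) * (k / c) := by
          rw [add_comm]
          exact (Int.mul_ediv_add_emod k c).symm
        have h1 : (π0 ^ k) a = (π0 ^ (k % (c:ℤ))) ((π0 ^ ((c:ℤ) * (k / c))) a) := by
          conv_lhs => rw [hsplit]
          rw [zpow_add, Equiv.Perm.mul_apply]
        rw [hfixc] at h1
        rw [← h1, hk]
    have hcX : Nat.card X = c := by
      have h1 := Nat.card_eq_of_bijective _ hbijec
      rw [Nat.card_eq_fintype_card (α := Fin c), Fintype.card_fin] at h1
      exact h1.symm
    have h2n : 1 < Nat.card X := Finite.one_lt_card_iff_nontrivial.mpr hnontriv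
    have hcne1 : c ≠ 1 := by omega
    set d := Nat.minFac c with hddef
    have hdp : d.Prime := Nat.minFac_prime hcne1
    have hdd : d ∣ c := Nat.minFac_dvd c
    have hdlt : d < c := by
      have hle : d ≤ c := Nat.le_of_dvd hcpos hdd
      rcases lt_or_eq_of_le hle with h | h
      · exact h
      · exact absurd (h ▸ hdp) (by rw [hcX] at hcard; exact hcard)
    haveI : NeZero d := ⟨hdp.pos.ne'⟩
    haveI : Fact (1 < d) := ⟨hdp.one_lt⟩
    let f4 : X → ULift.{u} (ZMod d) := fun x =>
      ULift.up ((Classical.choose (htrans x) : ℤ) : ZMod d)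
    have hf4 : ∀ (x : X) (m : ℤ), (π0 ^ m) a = x → f4 x = ULift.up ((m : ℤ) : ZMod d) := by
      intro x m hm
      have hs : (π0 ^ (Classical.choose (htrans x))) a = x := Classical.choose_spec (htrans x)
      set k := Classical.choose (htrans x) with hkd
      have hfix : (π0 ^ (m - k)) a = a := by
        rw [show m - k = -k + m by ring, zpow_add, Equiv.Perm.mul_apply, hm, ← hs, zpow_neg]
        exact Equiv.symm_apply_apply _ _
      obtain ⟨t, ht⟩ := hdvd _ hfix
      have hdZ : ((m - k : ℤ) : ZMod d) = 0 := by
        rw [ZMod.intCast_zmod_eq_zero_iff_dvd]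
        exact dvd_trans (Int.natCast_dvd_natCast.mpr hdd) ⟨t, ht⟩
      have heq : ((k : ℤ) : ZMod d) = ((m : ℤ) : ZMod d) := by
        push_cast at hdZ
        linear_combination -hdZ
      show ULift.up ((k : ℤ) : ZMod d) = ULift.up ((m : ℤ) : ZMod d)
      rw [heq]
    have hom4 : IsSolHom r (fun p : ULift.{u} (ZMod d) × ULift.{u} (ZMod d) =>
        (ULift.up (p.2.down + 1), ULift.up (p.1.down - 1))) f4 := by
      intro x y
      have hs : (π0 ^ (Classical.choose (htrans y))) a = y := Classical.choose_spec (htrans y)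
      set k := Classical.choose (htrans y) with hkd
      have h1 : f4 ((r (x, y)).1) = ULift.up (((k + 1 : ℤ)) : ZMod d) := by
        apply hf4
        rw [show (k + 1 : ℤ) = 1 + k by ring, zpow_add, Equiv.Perm.mul_apply, hs, zpow_one]
        exact (hconst x a y).symm
      have h2 : f4 y = ULift.up ((k : ℤ) : ZMod d) := hf4 y k hs
      rw [h1, h2]
      show ULift.up (((k + 1 : ℤ)) : ZMod d) = ULift.up (((k : ℤ) : ZMod d) + 1)
      congr 1
      push_cast
      ring
    have surj4 : Function.Surjective f4 := by
      intro z
      cases z with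
      | up zd =>
        obtain ⟨m, hm⟩ := ZMod.intCast_surjective (n := d) zd
        exact ⟨(π0 ^ m) a, by rw [hf4 _ m rfl, hm]⟩
    rcases hsimp _ _ (shift_yb d) f4 surj4 hom4 with hbij4 | hsub4
    · have h4 := Nat.card_eq_of_bijective f4 hbij4
      rw [Nat.card_ulift, Nat.card_eq_fintype_card (α := ZMod d), ZMod.card] at h4
      omega
    · exact not_subsingleton _ hsub4
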